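/- For the Hodgkin–Huxley ODE system V' = F_V(V,n,m,h), n' = α_n(V)(1-n) - β_n(V)n, m' = α_m(V)(1-m) - β_m(V)m, h' = α_h(V)(1-h) - β_h(V)h, with F_V as above, parameters ḡ_i ≥ 0, E_K < E_L < E_Na, 0 ≤ I < ḡ_L(E_Na − E_L), and α's, β's continuous nonnegative functions of V: if the initial condition lies in R = [E_K, E_Na] × [0,1]³ then the solution remains in R for all t ≥ 0. -/

import Mathlib

open Set

/-- Key comparison lemma: if `f' t + a t * f t ≥ 0` on `Ici 0` with `a` continuous
and `f 0 ≥ 0`, then `f ≥ 0` on `Ici 0`. -/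
lemma HH_nonneg_of_deriv_ge (a f f' : ℝ → ℝ) (ha : Continuous a)
    (hf : ∀ t ∈ Ici (0:ℝ), HasDerivAt f (f' t) t)
    (hge : ∀ t ∈ Ici (0:ℝ), 0 ≤ a t * f t + f' t)
    (h0 : 0 ≤ f 0) : ∀ t ∈ Ici (0:ℝ), 0 ≤ f t := by
  have hAderiv : ∀ t : ℝ, HasDerivAt (fun u => ∫ s in (0:ℝ)..u, a s) (a t) t := fun t =>
    intervalIntegral.integral_hasDerivAt_right (ha.intervalIntegrable 0 t)
      ha.aestronglyMeasurable.stronglyMeasurableAtFilter ha.continuousAt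
  have hgd : ∀ t ∈ Ici (0:ℝ), HasDerivAt (fun u => f u * Real.exp (∫ s in (0:ℝ)..u, a s))
      (f' t * Real.exp (∫ s in (0:ℝ)..t, a s)
        + f t * (Real.exp (∫ s in (0:ℝ)..t, a s) * a t)) t :=
    fun t ht => (hf t ht).mul ((hAderiv t).exp)
  have hmono : MonotoneOn (fun u => f u * Real.exp (∫ s in (0:ℝ)..u, a s)) (Ici (0:ℝ)) := by
    apply monotoneOn_of_deriv_nonneg (convex_Ici 0)
    · intro t ht
      exact (hgd t ht).continuousAt.continuousWithinAt
    · intro t ht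
      rw [interior_Ici] at ht
      exact ((hgd t (mem_Ici.mpr (le_of_lt (mem_Ioi.mp ht)))).differentiableAt).differentiableWithinAt
    · intro t ht
      rw [interior_Ici] at ht
      rw [(hgd t (mem_Ici.mpr (le_of_lt (mem_Ioi.mp ht)))).deriv]
      have h1 := hge t (mem_Ici.mpr (le_of_lt (mem_Ioi.mp ht)))
      have h2 := Real.exp_pos (∫ s in (0:ℝ)..t, a s)
      nlinarith
  intro t ht
  have h1 := hmono (self_mem_Ici) ht ht
  simp only [intervalIntegral.integral_same, Real.exp_zero, mul_one] at h1
  by_contra hc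
  push_neg at hc
  have h2 : f t * Real.exp (∫ s in (0:ℝ)..t, a s) < 0 :=
    mul_neg_of_neg_of_pos hc (Real.exp_pos _)
  linarith

theorem HH_ODE_invariant_region
    (I gNa gK gL EK EL ENa : ℝ)
    (hgNa : 0 ≤ gNa) (hgK : 0 ≤ gK) (hgL : 0 ≤ gL)
    (hKL : EK < EL) (hLNa : EL < ENa)
    (hI0 : 0 ≤ I) (hI : I < gL * (ENa - EL))
    (αn βn αm βm αh βh : ℝ → ℝ)
    (hcont : Continuous αn ∧ Continuous βn ∧ Continuous αm ∧ Continuous βm ∧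
      Continuous αh ∧ Continuous βh)
    (hnonneg : ∀ V, 0 ≤ αn V ∧ 0 ≤ βn V ∧ 0 ≤ αm V ∧ 0 ≤ βm V ∧ 0 ≤ αh V ∧ 0 ≤ βh V)
    (V n m h : ℝ → ℝ)
    (hV : ∀ t ∈ Ici (0:ℝ), HasDerivAt V
      (I + gNa * (m t) ^ 3 * h t * (ENa - V t) + gK * (n t) ^ 4 * (EK - V t)
        + gL * (EL - V t)) t)
    (hn : ∀ t ∈ Ici (0:ℝ), HasDerivAt n (αn (V t) * (1 - n t) - βn (V t) * n t) t)
    (hm : ∀ t ∈ Ici (0:ℝ), HasDerivAt m (αm (V t) * (1 - m t) - βm (V t) * m t) t)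
    (hh : ∀ t ∈ Ici (0:ℝ), HasDerivAt h (αh (V t) * (1 - h t) - βh (V t) * h t) t)
    (h0 : V 0 ∈ Icc EK ENa ∧ n 0 ∈ Icc (0:ℝ) 1 ∧ m 0 ∈ Icc (0:ℝ) 1 ∧ h 0 ∈ Icc (0:ℝ) 1) :
    ∀ t ∈ Ici (0:ℝ),
      V t ∈ Icc EK ENa ∧ n t ∈ Icc (0:ℝ) 1 ∧ m t ∈ Icc (0:ℝ) 1 ∧ h t ∈ Icc (0:ℝ) 1 := by
  obtain ⟨hαnC, hβnC, hαmC, hβmC, hαhC, hβhC⟩ := hcont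
  obtain ⟨hV0, hn0, hm0, hh0⟩ := h0
  -- continuity of truncated solution curves
  have hmaxc : Continuous (fun t : ℝ => max t 0) := continuous_id.max continuous_const
  have hVc : Continuous (fun t => V (max t 0)) := by
    rw [continuous_iff_continuousAt]
    intro t
    exact ContinuousAt.comp (g := V) ((hV _ (le_max_right t 0)).continuousAt) hmaxc.continuousAt
  have hnc : Continuous (fun t => n (max t 0)) := by
    rw [continuous_iff_continuousAt]
    intro t
    exact ContinuousAt.comp (g := n) ((hn _ (le_max_right t 0)).continuousAt) hmaxc.continuousAt
  have hmc : Continuous (fun t => m (max t 0)) := by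
    rw [continuous_iff_continuousAt]
    intro t
    exact ContinuousAt.comp (g := m) ((hm _ (le_max_right t 0)).continuousAt) hmaxc.continuousAt
  have hhc : Continuous (fun t => h (max t 0)) := by
    rw [continuous_iff_continuousAt]
    intro t
    exact ContinuousAt.comp (g := h) ((hh _ (le_max_right t 0)).continuousAt) hmaxc.continuousAt
  -- gating variable bounds
  have hnlo : ∀ t ∈ Ici (0:ℝ), 0 ≤ n t := by
    apply HH_nonneg_of_deriv_ge (fun t => αn (V (max t 0)) + βn (V (max t 0))) n
      (fun t => αn (V t) * (1 - n t) - βn (V t) * n t)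
      ((hαnC.comp hVc).add (hβnC.comp hVc)) hn _ hn0.1
    intro t ht
    simp only [max_eq_left (mem_Ici.mp ht)]
    have key : αn (V t) + βn (V t) * n t  = αn (V t) + βn (V t) * n t := rfl
    have key2 : (αn (V t) + βn (V t)) * n t + (αn (V t) * (1 - n t) - βn (V t) * n t)
        = αn (V t) := by ring
    rw [key2]; exact (hnonneg (V t)).1
  have hnhi : ∀ t ∈ Ici (0:ℝ), n t ≤ 1 := by
    have H := HH_nonneg_of_deriv_ge (fun t => αn (V (max t 0)) + βn (V (max t 0)))
      (fun t => 1 - n t)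
      (fun t => -(αn (V t) * (1 - n t) - βn (V t) * n t))
      ((hαnC.comp hVc).add (hβnC.comp hVc))
      (fun t ht => (hn t ht).const_sub 1) ?_ (by show (0:ℝ) ≤ 1 - n 0; linarith [hn0.2])
    · intro t ht
      have h2 := H t ht
      linarith
    · intro t ht
      simp only [max_eq_left (mem_Ici.mp ht)]
      have key : (αn (V t) + βn (V t)) * (1 - n t)
          + -(αn (V t) * (1 - n t) - βn (V t) * n t) = βn (V t) := by ring
      rw [key]; exact (hnonneg (V t)).2.1
  have hmlo : ∀ t ∈ Ici (0:ℝ), 0 ≤ m t := by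
    apply HH_nonneg_of_deriv_ge (fun t => αm (V (max t 0)) + βm (V (max t 0))) m
      (fun t => αm (V t) * (1 - m t) - βm (V t) * m t)
      ((hαmC.comp hVc).add (hβmC.comp hVc)) hm _ hm0.1
    intro t ht
    simp only [max_eq_left (mem_Ici.mp ht)]
    have key : (αm (V t) + βm (V t)) * m t + (αm (V t) * (1 - m t) - βm (V t) * m t)
        = αm (V t) := by ring
    rw [key]; exact (hnonneg (V t)).2.2.1
  have hmhi : ∀ t ∈ Ici (0:ℝ), m t ≤ 1 := by
    have H := HH_nonneg_of_deriv_ge (fun t => αm (V (max t 0)) + βm (V (max t 0)))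
      (fun t => 1 - m t)
      (fun t => -(αm (V t) * (1 - m t) - βm (V t) * m t))
      ((hαmC.comp hVc).add (hβmC.comp hVc))
      (fun t ht => (hm t ht).const_sub 1) ?_ (by show (0:ℝ) ≤ 1 - m 0; linarith [hm0.2])
    · intro t ht
      have h2 := H t ht
      linarith
    · intro t ht
      simp only [max_eq_left (mem_Ici.mp ht)]
      have key : (αm (V t) + βm (V t)) * (1 - m t)
          + -(αm (V t) * (1 - m t) - βm (V t) * m t) = βm (V t) := by ring
      rw [key]; exact (hnonneg (V t)).2.2.2.1
  have hhlo : ∀ t ∈ Ici (0:ℝ), 0 ≤ h t := by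
    apply HH_nonneg_of_deriv_ge (fun t => αh (V (max t 0)) + βh (V (max t 0))) h
      (fun t => αh (V t) * (1 - h t) - βh (V t) * h t)
      ((hαhC.comp hVc).add (hβhC.comp hVc)) hh _ hh0.1
    intro t ht
    simp only [max_eq_left (mem_Ici.mp ht)]
    have key : (αh (V t) + βh (V t)) * h t + (αh (V t) * (1 - h t) - βh (V t) * h t)
        = αh (V t) := by ring
    rw [key]; exact (hnonneg (V t)).2.2.2.2.1
  have hhhi : ∀ t ∈ Ici (0:ℝ), h t ≤ 1 := by
    have H := HH_nonneg_of_deriv_ge (fun t => αh (V (max t 0)) + βh (V (max t 0)))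
      (fun t => 1 - h t)
      (fun t => -(αh (V t) * (1 - h t) - βh (V t) * h t))
      ((hαhC.comp hVc).add (hβhC.comp hVc))
      (fun t ht => (hh t ht).const_sub 1) ?_ (by show (0:ℝ) ≤ 1 - h 0; linarith [hh0.2])
    · intro t ht
      have h2 := H t ht
      linarith
    · intro t ht
      simp only [max_eq_left (mem_Ici.mp ht)]
      have key : (αh (V t) + βh (V t)) * (1 - h t)
          + -(αh (V t) * (1 - h t) - βh (V t) * h t) = βh (V t) := by ring
      rw [key]; exact (hnonneg (V t)).2.2.2.2.2
  -- voltage bounds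
  have haVc : Continuous (fun t => gNa * (m (max t 0)) ^ 3 * h (max t 0)
      + gK * (n (max t 0)) ^ 4 + gL) :=
    (((continuous_const.mul (hmc.pow 3)).mul hhc).add
      (continuous_const.mul (hnc.pow 4))).add continuous_const
  have hVlo : ∀ t ∈ Ici (0:ℝ), EK ≤ V t := by
    have H := HH_nonneg_of_deriv_ge
      (fun t => gNa * (m (max t 0)) ^ 3 * h (max t 0) + gK * (n (max t 0)) ^ 4 + gL)
      (fun t => V t - EK)
      (fun t => I + gNa * (m t) ^ 3 * h t * (ENa - V t) + gK * (n t) ^ 4 * (EK - V t)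
        + gL * (EL - V t))
      haVc (fun t ht => (hV t ht).sub_const EK) ?_
      (by show (0:ℝ) ≤ V 0 - EK; linarith [hV0.1])
    · intro t ht
      have h2 := H t ht
      linarith
    · intro t ht
      simp only [max_eq_left (mem_Ici.mp ht)]
      have key : (gNa * (m t) ^ 3 * h t + gK * (n t) ^ 4 + gL) * (V t - EK)
          + (I + gNa * (m t) ^ 3 * h t * (ENa - V t) + gK * (n t) ^ 4 * (EK - V t)
            + gL * (EL - V t))
          = I + gNa * (m t) ^ 3 * h t * (ENa - EK) + gL * (EL - EK) := by ring
      rw [key]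
      have hp : 0 ≤ gNa * (m t) ^ 3 * h t :=
        mul_nonneg (mul_nonneg hgNa (pow_nonneg (hmlo t ht) 3)) (hhlo t ht)
      have h1 : 0 ≤ gNa * (m t) ^ 3 * h t * (ENa - EK) := mul_nonneg hp (by linarith)
      have h2 : 0 ≤ gL * (EL - EK) := mul_nonneg hgL (by linarith)
      linarith
  have hVhi : ∀ t ∈ Ici (0:ℝ), V t ≤ ENa := by
    have H := HH_nonneg_of_deriv_ge
      (fun t => gNa * (m (max t 0)) ^ 3 * h (max t 0) + gK * (n (max t 0)) ^ 4 + gL)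
      (fun t => ENa - V t)
      (fun t => -(I + gNa * (m t) ^ 3 * h t * (ENa - V t) + gK * (n t) ^ 4 * (EK - V t)
        + gL * (EL - V t)))
      haVc (fun t ht => (hV t ht).const_sub ENa) ?_
      (by show (0:ℝ) ≤ ENa - V 0; linarith [hV0.2])
    · intro t ht
      have h2 := H t ht
      linarith
    · intro t ht
      simp only [max_eq_left (mem_Ici.mp ht)]
      have key : (gNa * (m t) ^ 3 * h t + gK * (n t) ^ 4 + gL) * (ENa - V t)
          + -(I + gNa * (m t) ^ 3 * h t * (ENa - V t) + gK * (n t) ^ 4 * (EK - V t)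
            + gL * (EL - V t))
          = -I + gK * (n t) ^ 4 * (ENa - EK) + gL * (ENa - EL) := by ring
      rw [key]
      have hq : 0 ≤ gK * (n t) ^ 4 := mul_nonneg hgK (pow_nonneg (hnlo t ht) 4)
      have h1 : 0 ≤ gK * (n t) ^ 4 * (ENa - EK) := mul_nonneg hq (by linarith)
      linarith
  intro t ht
  exact ⟨⟨hVlo t ht, hVhi t ht⟩, ⟨hnlo t ht, hnhi t ht⟩,
    ⟨hmlo t ht, hmhi t ht⟩, ⟨hhlo t ht, hhhi t ht⟩⟩
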